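/- Let 𝓕 and 𝓛 be the Fibonacci type and Lucas type polynomial sequences with the same parameters c, d and with 𝓛_0 = 𝓕_1 = a. Then for all natural numbers n and m ≥ 1, one has a·𝓛_{n+m} = 𝓛_{n+1}·𝓕_m + d·𝓛_n·𝓕_{m−1} as polynomials in ℝ[x]. -/

import Mathlib

open Polynomial

theorem lucas_fib_Honsberger (a : ℝ) (ha : a ≠ 0) (b c d : ℝ[X]) (hb : b ≠ 0) (hc : c ≠ 0)
    (hd : d ≠ 0)
    (F : ℕ → ℝ[X]) (hF0 : F 0 = 0) (hF1 : F 1 = C a)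
    (hFrec : ∀ n, 2 ≤ n → F n = c * F (n - 1) + d * F (n - 2))
    (L : ℕ → ℝ[X]) (hL0 : L 0 = C a) (hL1 : L 1 = b)
    (hLrec : ∀ n, 2 ≤ n → L n = c * L (n - 1) + d * L (n - 2)) :
    ∀ n m : ℕ, 1 ≤ m →
      C a * L (n + m) = L (n + 1) * F m + d * L n * F (m - 1) := by
  have key : ∀ m n : ℕ, C a * L (n + m + 1) = L (n + 1) * F (m + 1) + d * L n * F m := by
    intro m
    induction m using Nat.twoStepInduction with
    | zero =>
      intro n
      simp [hF0, hF1, mul_comm]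
    | one =>
      intro n
      have hF2 : F 2 = c * C a := by
        rw [hFrec 2 (by norm_num)]; simp [hF0, hF1]
      have hL2 : L (n + 2) = c * L (n + 1) + d * L n := by
        rw [hLrec (n + 2) (by omega)]; congr 1
      rw [show n + 1 + 1 = n + 2 from rfl, hL2, hF2, hF1]
      ring
    | more m ih2 ih1 =>
      intro n
      have hF : F (m + 2 + 1) = c * F (m + 2) + d * F (m + 1) := by
        rw [hFrec (m + 3) (by omega)]; congr 1
      have hF' : F (m + 2) = c * F (m + 1) + d * F m := by
        rw [hFrec (m + 2) (by omega)]; congr 1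
      have e1 := ih1 n
      have e2 := ih2 n
      have hL : L (n + (m + 2) + 1) = c * L (n + (m + 1) + 1) + d * L (n + m + 1) := by
        rw [show n + (m + 2) + 1 = n + m + 3 from by ring, hLrec (n + m + 3) (by omega)]
        congr 2 <;> omega
      rw [hL, hF]
      rw [show n + (m + 1) + 1 = n + m + 1 + 1 from by ring] at *
      calc C a * (c * L (n + m + 1 + 1) + d * L (n + m + 1))
          = c * (C a * L (n + m + 1 + 1)) + d * (C a * L (n + m + 1)) := by ring
        _ = c * (L (n + 1) * F (m + 2) + d * L n * F (m + 1))
            + d * (L (n + 1) * F (m + 1) + d * L n * F m) := by rw [e1, e2]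
        _ = L (n + 1) * (c * F (m + 2) + d * F (m + 1)) + d * L n * F (m + 2) := by
              rw [hF']; ring
  intro n m hm
  obtain ⟨k, rfl⟩ := Nat.exists_eq_add_of_le hm
  have := key k n
  simpa [Nat.add_comm 1 k, Nat.add_sub_cancel, ← Nat.add_assoc] using this
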